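/- Let (Λ, dx) be a complete σ-finite measure space, N ≥ 2, P a symmetric probability density on Λ^N, and ρ^{(k)} its k-variable marginal. Let 1 ≤ m ≤ N−1, A ⊂ Λ of positive measure, and γ : A → (0,∞) measurable. If ρ^{(m+1)}(x_1,...,x_{m+1}) ≥ γ(x_{m+1}) ρ^{(m)}(x_1,...,x_m) for a.e. (x_1,...,x_{m+1}) ∈ Λ^m × A, then ρ^{(m)}(x_1,...,x_m) ≥ γ(x_m) ρ^{(m−1)}(x_1,...,x_{m−1}) for a.e. (x_1,...,x_m) ∈ Λ^{m−1} × A (with ρ^{(0)} := 1). -/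

import Mathlib

open MeasureTheory

/-- The `k`-variable marginal `ρ^{(k)}` of a density `P` on `Λ^N`:
`ρ^{(k)}(x₁,…,x_k) = ∫_{Λ^{N−k}} P(x₁,…,x_N) dx_{k+1} ⋯ dx_N` (with `ρ^{(N)} = P`,
`ρ^{(0)} = ∫ P`). -/
noncomputable def marg {Λ : Type*} [MeasurableSpace Λ] (μ : Measure Λ) (N k : ℕ)
    (hk : k ≤ N) (P : (Fin N → Λ) → ℝ) : (Fin k → Λ) → ℝ :=
  fun y => ∫ z : Fin (N - k) → Λ,
    P (fun i => Fin.append y z (Fin.cast (by omega) i)) ∂(Measure.pi fun _ => μ)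

set_option linter.unusedSectionVars false
set_option maxHeartbeats 1000000

section aux
variable {Λ : Type*} [MeasurableSpace Λ] {μ : Measure Λ} [SigmaFinite μ]

lemma integral_pi_reindex {a b : ℕ} (h : a = b) (f : (Fin a → Λ) → ℝ) :
    ∫ x : Fin a → Λ, f x ∂(Measure.pi fun _ => μ)
      = ∫ v : Fin b → Λ, f (v ∘ Fin.cast h) ∂(Measure.pi fun _ => μ) := by
  subst h
  simp [Function.comp_def]

lemma mp_append (k n : ℕ) :
    MeasurePreserving (fun p : (Fin k → Λ) × (Fin n → Λ) => Fin.append p.1 p.2)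
      ((Measure.pi fun _ => μ).prod (Measure.pi fun _ => μ))
      (Measure.pi fun _ : Fin (k + n) => μ) := by
  have h1 := measurePreserving_sumPiEquivProdPi_symm
    (X := fun _ : Fin k ⊕ Fin n => Λ) (fun _ => μ)
  have h2 := measurePreserving_piCongrLeft
    (α := fun _ : Fin (k + n) => Λ) (fun _ => μ) finSumFinEquiv
  have h3 := h2.comp h1
  convert h3 using 1
  funext p
  funext i
  obtain ⟨j, rfl⟩ := finSumFinEquiv.surjective i
  cases j with
  | inl a =>
      simp only [Function.comp_apply, MeasurableEquiv.coe_piCongrLeft,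
        Equiv.piCongrLeft_apply_apply]
      simp [MeasurableEquiv.coe_piCongrLeft, Equiv.piCongrLeft_apply_apply,
        MeasurableEquiv.coe_sumPiEquivProdPi_symm, Equiv.sumPiEquivProdPi_symm_apply]
  | inr b =>
      simp only [Function.comp_apply, MeasurableEquiv.coe_piCongrLeft,
        Equiv.piCongrLeft_apply_apply]
      simp [MeasurableEquiv.coe_piCongrLeft, Equiv.piCongrLeft_apply_apply,
        MeasurableEquiv.coe_sumPiEquivProdPi_symm, Equiv.sumPiEquivProdPi_symm_apply]

end aux

section aux2
variable {Λ : Type*} [MeasurableSpace Λ] {μ : Measure Λ} [SigmaFinite μ]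

lemma mp_appendCast {N : ℕ} (k n : ℕ) (e : N = k + n) :
    MeasurePreserving (fun p : (Fin k → Λ) × (Fin n → Λ) =>
        (fun i : Fin N => Fin.append p.1 p.2 (Fin.cast e i)))
      ((Measure.pi fun _ => μ).prod (Measure.pi fun _ => μ))
      (Measure.pi fun _ : Fin N => μ) := by
  subst e
  exact mp_append k n

lemma marg_eq {N : ℕ} (k n : ℕ) (e : N = k + n) (hk : k ≤ N) (P : (Fin N → Λ) → ℝ)
    (y : Fin k → Λ) :
    marg μ N k hk P y
      = ∫ v : Fin n → Λ, P (fun i => Fin.append y v (Fin.cast e i))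
          ∂(Measure.pi fun _ => μ) := by
  unfold marg
  rw [integral_pi_reindex (show N - k = n by omega)]
  congr 1
  funext v
  congr 1
  funext i
  rw [Fin.append_cast_right]
  rfl

end aux2

section aux3
variable {Λ : Type*} [MeasurableSpace Λ] {μ : Measure Λ} [SigmaFinite μ]

lemma append_perm {k n : ℕ} (τ : Equiv.Perm (Fin k)) (y : Fin k → Λ) (z : Fin n → Λ)
    (j : Fin (k + n)) :
    Fin.append y z ((finSumFinEquiv.symm.trans
      ((Equiv.sumCongr τ (Equiv.refl (Fin n))).trans finSumFinEquiv)) j)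
      = Fin.append (y ∘ τ) z j := by
  induction j using Fin.addCases with
  | left a => simp
  | right b => simp

lemma marg_symm {N : ℕ} {P : (Fin N → Λ) → ℝ}
    (hPsym : ∀ σ : Equiv.Perm (Fin N), ∀ x, P (x ∘ σ) = P x)
    {k : ℕ} (hk : k ≤ N) (τ : Equiv.Perm (Fin k)) (y : Fin k → Λ) :
    marg μ N k hk P (y ∘ τ) = marg μ N k hk P y := by
  have e : N = k + (N - k) := by omega
  unfold marg
  congr 1
  funext z
  set σ₀ : Equiv.Perm (Fin (k + (N - k))) := finSumFinEquiv.symm.trans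
      ((Equiv.sumCongr τ (Equiv.refl (Fin (N - k)))).trans finSumFinEquiv) with hσ₀
  set σ : Equiv.Perm (Fin N) := (finCongr e).trans (σ₀.trans (finCongr e.symm)) with hσ
  have hfun : ((fun i : Fin N => Fin.append y z (Fin.cast e i)) ∘ ⇑σ)
      = fun i : Fin N => Fin.append (y ∘ ⇑τ) z (Fin.cast e i) := by
    funext i
    exact append_perm τ y z (Fin.cast e i)
  calc P (fun i : Fin N => Fin.append (y ∘ ⇑τ) z (Fin.cast e i))
      = P ((fun i : Fin N => Fin.append y z (Fin.cast e i)) ∘ ⇑σ) := by rw [hfun]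
    _ = P (fun i : Fin N => Fin.append y z (Fin.cast e i)) := hPsym σ _

lemma mp_compPerm {ι : Type*} [Fintype ι] (τ : Equiv.Perm ι) :
    MeasurePreserving (fun x : ι → Λ => x ∘ τ)
      (Measure.pi fun _ => μ) (Measure.pi fun _ => μ) := by
  have hm : Measurable (fun x : ι → Λ => x ∘ τ) :=
    measurable_pi_lambda _ fun i => measurable_pi_apply _
  refine ⟨hm, ?_⟩
  refine (Measure.pi_eq fun s hs => ?_).symm
  rw [Measure.map_apply hm (MeasurableSet.univ_pi hs)]
  have hpre : (fun x : ι → Λ => x ∘ τ) ⁻¹' (Set.univ.pi s)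
      = Set.univ.pi (fun j => s (τ.symm j)) := by
    ext x
    simp only [Set.mem_preimage, Set.mem_pi, Set.mem_univ, true_implies, Function.comp_apply]
    constructor
    · intro h j; simpa using h (τ.symm j)
    · intro h i; simpa using h (τ i)
  rw [hpre, Measure.pi_pi]
  exact Equiv.prod_comp τ.symm fun j => μ (s j)

end aux3

section aux4
variable {Λ : Type*} [MeasurableSpace Λ] {μ : Measure Λ} [SigmaFinite μ]

lemma mp_cons (n : ℕ) :
    MeasurePreserving (fun p : Λ × (Fin n → Λ) => Fin.cons p.1 p.2)
      (μ.prod (Measure.pi fun _ => μ)) (Measure.pi fun _ : Fin (n + 1) => μ) := by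
  have h := (measurePreserving_piFinSuccAbove (fun _ : Fin (n + 1) => μ) 0).symm
  convert h using 1
  funext p
  rw [show ⇑(MeasurableEquiv.piFinSuccAbove (fun _ : Fin (n+1) => Λ) 0).symm
      = fun q : Λ × (Fin n → Λ) => Fin.insertNth 0 q.1 q.2 from rfl]
  exact (Fin.insertNth_zero' p.1 p.2).symm

lemma emb_cons (n : ℕ) :
    MeasurableEmbedding (fun p : Λ × (Fin n → Λ) => (Fin.cons p.1 p.2 : Fin (n+1) → Λ)) := by
  have : (fun p : Λ × (Fin n → Λ) => Fin.cons p.1 p.2)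
      = ⇑(MeasurableEquiv.piFinSuccAbove (fun _ : Fin (n+1) => Λ) 0).symm := by
    funext p
    exact (Fin.insertNth_zero' p.1 p.2).symm
  rw [this]
  exact (MeasurableEquiv.piFinSuccAbove _ 0).symm.measurableEmbedding

lemma mp_snoc (n : ℕ) :
    MeasurePreserving (fun p : (Fin n → Λ) × Λ => Fin.snoc p.1 p.2)
      ((Measure.pi fun _ => μ).prod μ) (Measure.pi fun _ : Fin (n + 1) => μ) := by
  have h := ((measurePreserving_piFinSuccAbove (fun _ : Fin (n + 1) => μ)
    (Fin.last n)).symm).comp (Measure.measurePreserving_swap)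
  convert h using 1
  funext p
  show Fin.snoc p.1 p.2
      = (MeasurableEquiv.piFinSuccAbove (fun _ : Fin (n+1) => Λ) (Fin.last n)).symm (p.2, p.1)
  rw [show ⇑(MeasurableEquiv.piFinSuccAbove (fun _ : Fin (n+1) => Λ) (Fin.last n)).symm
      = fun q : Λ × (Fin n → Λ) => Fin.insertNth (Fin.last n) q.1 q.2 from rfl]
  exact (Fin.insertNth_last' p.2 p.1).symm

lemma qmp_init (n : ℕ) :
    Measure.QuasiMeasurePreserving
      (fun (x : Fin (n + 1) → Λ) (i : Fin n) => x (Fin.castSucc i))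
      (Measure.pi fun _ => μ) (Measure.pi fun _ => μ) := by
  have h1 := (measurePreserving_piFinSuccAbove (fun _ : Fin (n + 1) => μ)
    (Fin.last n)).quasiMeasurePreserving
  have h2 : Measure.QuasiMeasurePreserving (Prod.snd : Λ × (Fin n → Λ) → (Fin n → Λ))
      (μ.prod (Measure.pi fun _ => μ)) (Measure.pi fun _ => μ) := by
    refine ⟨measurable_snd, ?_⟩
    rw [Measure.map_snd_prod]
    exact Measure.smul_absolutelyContinuous
  have h3 := h2.comp h1
  convert h3 using 1
  funext x
  funext i
  show x (Fin.castSucc i)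
    = (MeasurableEquiv.piFinSuccAbove (fun _ : Fin (n+1) => Λ) (Fin.last n) x).2 i
  rw [show (MeasurableEquiv.piFinSuccAbove (fun _ : Fin (n+1) => Λ) (Fin.last n) x).2 i
      = x ((Fin.last n).succAbove i) from rfl, Fin.succAbove_last]

end aux4

section core
variable {Λ : Type*} [MeasurableSpace Λ] {μ : Measure Λ} [SigmaFinite μ]

lemma marg_succ {N : ℕ} (P : (Fin N → Λ) → ℝ)
    (hPint : Integrable P (Measure.pi fun _ : Fin N => μ))
    (k : ℕ) (hk1 : k + 1 ≤ N) (hk : k ≤ N) :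
    ∀ᵐ y ∂(Measure.pi fun _ : Fin k => μ),
      Integrable (fun z : Λ => marg μ N (k + 1) hk1 P (Fin.snoc y z)) μ ∧
      ∫ z : Λ, marg μ N (k + 1) hk1 P (Fin.snoc y z) ∂μ = marg μ N k hk P y := by
  set n := N - (k + 1) with hn
  have e2 : N = (k + 1) + n := by omega
  have e' : N = k + (n + 1) := by omega
  set F : ((Fin k → Λ) × (Λ × (Fin n → Λ))) → ℝ :=
    fun p => P (fun i => Fin.append p.1 (Fin.cons p.2.1 p.2.2) (Fin.cast e' i)) with hF
  have hΨ : MeasurePreserving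
      (fun p : (Fin k → Λ) × (Λ × (Fin n → Λ)) =>
        (fun i : Fin N => Fin.append p.1 (Fin.cons p.2.1 p.2.2) (Fin.cast e' i)))
      ((Measure.pi fun _ => μ).prod (μ.prod (Measure.pi fun _ => μ)))
      (Measure.pi fun _ : Fin N => μ) := by
    have h1 := (MeasurePreserving.id (Measure.pi fun _ : Fin k => μ)).prod (mp_cons (μ := μ) n)
    have h2 := (mp_appendCast (μ := μ) k (n + 1) e').comp h1
    convert h2 using 1
    rfl
  have hFint : Integrable F
      ((Measure.pi fun _ : Fin k => μ).prod (μ.prod (Measure.pi fun _ : Fin n => μ))) := by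
    have := (hΨ.integrable_comp hPint.aestronglyMeasurable).2 hPint
    exact this
  filter_upwards [hFint.prod_right_ae] with y hy
  have key : ∀ z : Λ, marg μ N (k + 1) hk1 P (Fin.snoc y z)
      = ∫ w : Fin n → Λ, F (y, (z, w)) ∂(Measure.pi fun _ => μ) := by
    intro z
    rw [marg_eq (k + 1) n e2]
    congr 1
    funext w
    congr 1
    funext i
    show Fin.append (Fin.snoc y z) w (Fin.cast e2 i)
        = Fin.append y (Fin.cons z w) (Fin.cast e' i)
    rw [Fin.append_left_snoc]
    rfl
  constructor
  · have h := hy.integral_prod_left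
    simp only [← key] at h
    exact h
  · simp only [key]
    rw [integral_integral hy, marg_eq k (n + 1) e']
    have h := (mp_cons (μ := μ) n).integral_comp (emb_cons n)
      (fun v : Fin (n + 1) → Λ => P (fun i => Fin.append y v (Fin.cast e' i)))
    exact h
end core

lemma marg_nonneg {Λ : Type*} [MeasurableSpace Λ] {μ : Measure Λ} {N k : ℕ}
    (hk : k ≤ N) {P : (Fin N → Λ) → ℝ} (hPnn : ∀ x, 0 ≤ P x) (y : Fin k → Λ) :
    0 ≤ marg μ N k hk P y :=
  integral_nonneg fun _ => hPnn _


/-- **Lemma on marginals.** If `ρ^{(m+1)}(x₁,…,x_{m+1}) ≥ γ(x_{m+1}) ρ^{(m)}(x₁,…,x_m)`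
a.e. on `Λ^m × A`, then `ρ^{(m)}(x₁,…,x_m) ≥ γ(x_m) ρ^{(m−1)}(x₁,…,x_{m−1})`
a.e. on `Λ^{m−1} × A`. -/
theorem marg_step_down
    {Λ : Type*} [MeasurableSpace Λ] (μ : Measure Λ) [SigmaFinite μ]
    (N : ℕ) (hN : 2 ≤ N) (P : (Fin N → Λ) → ℝ) (hPmeas : Measurable P)
    (hPnn : ∀ x, 0 ≤ P x)
    (hPsym : ∀ σ : Equiv.Perm (Fin N), ∀ x, P (x ∘ σ) = P x)
    (hPint : ∫ x, P x ∂(Measure.pi fun _ : Fin N => μ) = 1)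
    (m : ℕ) (hm : 1 ≤ m) (hmN : m ≤ N - 1)
    (A : Set Λ) (hA : MeasurableSet A) (hA0 : 0 < μ A)
    (γ : Λ → ℝ) (hγmeas : Measurable γ) (hγpos : ∀ a ∈ A, 0 < γ a)
    (hyp : ∀ᵐ x ∂(Measure.pi fun _ : Fin (m + 1) => μ), x ⟨m, by omega⟩ ∈ A →
      γ (x ⟨m, by omega⟩) *
        marg μ N m (by omega) P (fun i : Fin m => x (Fin.castLE (by omega) i)) ≤
      marg μ N (m + 1) (by omega) P x) :
    ∀ᵐ x ∂(Measure.pi fun _ : Fin m => μ), x ⟨m - 1, by omega⟩ ∈ A →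
      γ (x ⟨m - 1, by omega⟩) *
        marg μ N (m - 1) (by omega) P (fun i : Fin (m - 1) => x (Fin.castLE (by omega) i)) ≤
      marg μ N m (by omega) P x := by
  obtain ⟨m', rfl⟩ : ∃ m', m = m' + 1 := ⟨m - 1, by omega⟩
  have hM1 : m' + 1 + 1 ≤ N := by omega
  have hM : m' + 1 ≤ N := by omega
  have hm'' : m' ≤ N := by omega
  have hPint' : Integrable P (Measure.pi fun _ : Fin N => μ) := by
    by_contra h
    rw [integral_undef h] at hPint
    exact one_ne_zero hPint.symm
  set τ : Equiv.Perm (Fin (m' + 1 + 1)) :=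
    Equiv.swap ⟨m', by omega⟩ ⟨m' + 1, by omega⟩ with hτ
  have hmp : MeasurePreserving
      (fun p : (Fin (m' + 1) → Λ) × Λ => ((Fin.snoc p.1 p.2 : Fin (m' + 1 + 1) → Λ) ∘ τ))
      ((Measure.pi fun _ => μ).prod μ) (Measure.pi fun _ : Fin (m' + 1 + 1) => μ) :=
    (mp_compPerm τ).comp (mp_snoc (m' + 1))
  have h1 := hmp.quasiMeasurePreserving.ae hyp
  have h2 := Measure.ae_ae_of_ae_prod h1
  have h3 := marg_succ P hPint' (m' + 1) hM1 hM
  have h4 := (qmp_init (μ := μ) m').ae (marg_succ P hPint' m' hM hm'')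
  filter_upwards [h2, h3, h4] with x hx2 hx3 hx4
  intro ha
  have ha' : x ⟨m', by omega⟩ ∈ A := ha
  have hub : ∀ᵐ z ∂μ,
      γ (x ⟨m', by omega⟩) *
        marg μ N (m' + 1) hM P (Fin.snoc (fun i : Fin m' => x (Fin.castSucc i)) z)
      ≤ marg μ N (m' + 1 + 1) hM1 P (Fin.snoc x z) := by
    filter_upwards [hx2] with z hz
    have e1 : ((Fin.snoc x z : Fin (m' + 1 + 1) → Λ) ∘ τ) ⟨m' + 1, by omega⟩
        = x ⟨m', by omega⟩ := by
      show (Fin.snoc x z : Fin (m' + 1 + 1) → Λ) (τ ⟨m' + 1, by omega⟩) = x ⟨m', by omega⟩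
      have h5 : τ (⟨m' + 1, by omega⟩ : Fin (m' + 1 + 1)) = ⟨m', by omega⟩ := by
        rw [hτ]; exact Equiv.swap_apply_right _ _
      rw [h5]
      have h6 : (⟨m', by omega⟩ : Fin (m' + 1 + 1)) = Fin.castSucc (Fin.last m') := rfl
      rw [h6, Fin.snoc_castSucc]
      rfl
    have e2 : (fun i : Fin (m' + 1) =>
          ((Fin.snoc x z : Fin (m' + 1 + 1) → Λ) ∘ τ) (Fin.castLE (by omega) i))
        = Fin.snoc (fun i : Fin m' => x (Fin.castSucc i)) z := by
      funext i
      induction i using Fin.lastCases with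
      | last =>
          have h5 : τ (Fin.castLE (by omega) (Fin.last m')) = Fin.last (m' + 1) := by
            rw [hτ]
            have h6 : (Fin.castLE (by omega : m' + 1 ≤ m' + 1 + 1) (Fin.last m'))
                = (⟨m', by omega⟩ : Fin (m' + 1 + 1)) := rfl
            rw [h6, Equiv.swap_apply_left]
            rfl
          show (Fin.snoc x z : Fin (m' + 1 + 1) → Λ) (τ (Fin.castLE (by omega) (Fin.last m'))) = _
          rw [h5, Fin.snoc_last, Fin.snoc_last]
      | cast i =>
          have hne1 : (Fin.castLE (by omega : m' + 1 ≤ m' + 1 + 1) (Fin.castSucc i) : Fin (m' + 1 + 1)) ≠ ⟨m', by omega⟩ := by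
            simp [Fin.ext_iff]
            omega
          have hne2 : (Fin.castLE (by omega : m' + 1 ≤ m' + 1 + 1) (Fin.castSucc i) : Fin (m' + 1 + 1)) ≠ ⟨m' + 1, by omega⟩ := by
            simp [Fin.ext_iff]
            omega
          show (Fin.snoc x z : Fin (m' + 1 + 1) → Λ)
              (τ (Fin.castLE (by omega) (Fin.castSucc i))) = _
          rw [hτ, Equiv.swap_apply_of_ne_of_ne hne1 hne2]
          have h7 : (Fin.castLE (by omega : m' + 1 ≤ m' + 1 + 1) (Fin.castSucc i))
              = Fin.castSucc (Fin.castSucc i) := rfl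
          rw [h7, Fin.snoc_castSucc, Fin.snoc_castSucc]
    have e3 : marg μ N (m' + 1 + 1) hM1 P ((Fin.snoc x z : Fin (m' + 1 + 1) → Λ) ∘ τ)
        = marg μ N (m' + 1 + 1) hM1 P (Fin.snoc x z) := marg_symm hPsym hM1 τ _
    have hz' := hz (by rw [e1]; exact ha')
    rw [e3] at hz'
    rw [e1, e2] at hz'
    exact hz'
  have h0 : 0 ≤ᵐ[μ] fun z =>
      γ (x ⟨m', by omega⟩) *
        marg μ N (m' + 1) hM P (Fin.snoc (fun i : Fin m' => x (Fin.castSucc i)) z) :=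
    Filter.Eventually.of_forall fun z =>
      mul_nonneg (le_of_lt (hγpos _ ha')) (marg_nonneg hM hPnn _)
  show γ (x ⟨m', by omega⟩) *
      marg μ N m' hm'' P (fun i : Fin m' => x (Fin.castSucc i))
      ≤ marg μ N (m' + 1) hM P x
  calc γ (x ⟨m', by omega⟩) * marg μ N m' hm'' P (fun i : Fin m' => x (Fin.castSucc i))
      = γ (x ⟨m', by omega⟩) * ∫ z, marg μ N (m' + 1) hM P
          (Fin.snoc (fun i : Fin m' => x (Fin.castSucc i)) z) ∂μ := by rw [hx4.2]
    _ = ∫ z, γ (x ⟨m', by omega⟩) * marg μ N (m' + 1) hM P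
          (Fin.snoc (fun i : Fin m' => x (Fin.castSucc i)) z) ∂μ :=
        (integral_const_mul _ _).symm
    _ ≤ ∫ z, marg μ N (m' + 1 + 1) hM1 P (Fin.snoc x z) ∂μ :=
        integral_mono_of_nonneg h0 hx3.1 hub
    _ = marg μ N (m' + 1) hM P x := hx3.2
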